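/- Let n ≥ 2 and let v₀, …, vₙ ∈ ℝⁿ satisfy v₀ + ⋯ + vₙ = 0. Define the edge vectors w₀ := v₀ − vₙ and w_i := v_i − v_{i−1} for 1 ≤ i ≤ n. Then det of the n × n matrix with columns w₁, …, wₙ equals (n+1) times det of the n × n matrix with columns v₁, …, vₙ. -/

import Mathlib

open scoped RealInnerProductSpace BigOperators

theorem det_edge_matrix (n : ℕ) (hn : 2 ≤ n)
    (v : Fin (n + 1) → EuclideanSpace ℝ (Fin n)) (hv : (∑ i, v i) = 0)
    (w : Fin (n + 1) → EuclideanSpace ℝ (Fin n))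
    (hw0 : w 0 = v 0 - v (Fin.last n))
    (hwi : ∀ i : Fin (n + 1), (i : ℕ) ≠ 0 → w i = v i - v (i - 1)) :
    (Matrix.of fun r (c : Fin n) => w c.succ r).det =
      ((n : ℝ) + 1) * (Matrix.of fun r (c : Fin n) => v c.succ r).det := by
  classical
  haveI : NeZero n := ⟨by omega⟩
  set V : Matrix (Fin n) (Fin n) ℝ := Matrix.of (fun r (c : Fin n) => v c.succ r) with hV
  set A : Matrix (Fin n) (Fin n) ℝ :=
    Matrix.of (fun j c : Fin n =>
      (if c = 0 then (1:ℝ) else 0) + (if c = j then 1 else 0)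
        - (if (c : ℕ) = (j : ℕ) + 1 then 1 else 0)) with hA
  set U : Matrix (Fin n) (Fin n) ℝ :=
    Matrix.of (fun j c : Fin n => if j ≤ c then (1:ℝ) else 0) with hU
  have hsum : ∀ r : Fin n, (∑ j : Fin n, v j.succ r) = - v 0 r := by
    intro r
    have h := congrArg (fun x : EuclideanSpace ℝ (Fin n) => x r) hv
    have h' : ∑ i : Fin (n+1), v i r = 0 :=
      by simpa using h
    rw [Fin.sum_univ_succ] at h'
    linarith
  -- W = V * A
  have hW : (Matrix.of fun r (c : Fin n) => w c.succ r) = V * A := by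
    ext r c
    have hcs : ((c.succ : Fin (n+1)) : ℕ) ≠ 0 := by simp
    simp only [Matrix.of_apply]
    rw [hwi c.succ hcs]
    have hsub : (c.succ : Fin (n+1)) - 1 = c.castSucc := by
      have hcn : (c : ℕ) < n := c.isLt
      ext
      rw [Fin.sub_def]
      simp only [Fin.coe_castSucc, Fin.val_succ, Fin.val_one']
      rw [Nat.mod_eq_of_lt (show 1 < n + 1 by omega)]
      rw [show n + 1 - 1 + ((c : ℕ) + 1) = (c : ℕ) + (n + 1) by omega,
        Nat.add_mod_right]
      exact Nat.mod_eq_of_lt (by omega)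
    rw [hsub, PiLp.sub_apply]
    simp only [Matrix.mul_apply, Matrix.of_apply, hV, hA]
    have split : ∀ j : Fin n,
        v j.succ r * ((if c = 0 then (1:ℝ) else 0) + (if c = j then 1 else 0)
          - (if (c : ℕ) = (j : ℕ) + 1 then 1 else 0))
        = (if c = 0 then v j.succ r else 0) + (if c = j then v j.succ r else 0)
          - (if (c : ℕ) = (j : ℕ) + 1 then v j.succ r else 0) := by
      intro j
      rw [mul_sub, mul_add, mul_ite, mul_ite, mul_ite, mul_one, mul_zero]
    rw [Finset.sum_congr rfl (fun j _ => split j)]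
    rw [Finset.sum_sub_distrib, Finset.sum_add_distrib,
      Finset.sum_ite_eq Finset.univ c (fun j => v j.succ r)]
    by_cases hc : c = 0
    · subst hc
      have h3 : ∀ j : Fin n, ¬(((0:Fin n) : ℕ) = (j : ℕ) + 1) := by
        intro j; simp
      rw [Finset.sum_congr rfl (fun j _ => if_neg (h3 j))]
      simp [hsum r, Fin.castSucc_zero]
      ring
    · have hc1 : 1 ≤ (c : ℕ) := Nat.one_le_iff_ne_zero.mpr (fun h => hc (Fin.ext h))
      set c' : Fin n := ⟨(c : ℕ) - 1, by omega⟩ with hc'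
      have h3 : ∀ j : Fin n, ((c:ℕ) = (j:ℕ) + 1) ↔ j = c' := by
        intro j
        constructor
        · intro h; ext; simp only [hc']; omega
        · intro h; subst h; simp only [hc']; omega
      rw [Finset.sum_congr rfl (fun j _ => if_congr (h3 j) rfl rfl),
        Finset.sum_ite_eq' Finset.univ c' (fun j => v j.succ r)]
      have hprev : (c'.succ : Fin (n+1)) = c.castSucc := by
        ext; simp only [Fin.val_succ, Fin.coe_castSucc, hc']; omega
      simp [hc, hprev]
  -- A * U = 1 + all-ones
  have hAU : A * U = 1 + Matrix.replicateCol (Fin 1) (1 : Fin n → ℝ) * Matrix.replicateRow (Fin 1) (1 : Fin n → ℝ) := by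
    ext j c
    simp only [Matrix.mul_apply, Matrix.add_apply, Matrix.replicateCol_apply, Matrix.replicateRow_apply,
      Matrix.of_apply, Fintype.sum_unique, Pi.one_apply, mul_one, hA, hU]
    set f : Fin n → ℝ := fun k => if k ≤ c then (1:ℝ) else 0 with hf
    have split : ∀ k : Fin n,
        ((if k = 0 then (1:ℝ) else 0) + (if k = j then 1 else 0)
          - (if (k : ℕ) = (j : ℕ) + 1 then 1 else 0)) * (if k ≤ c then 1 else 0)
        = (if k = 0 then f k else 0) + (if k = j then f k else 0)
          - (if (k : ℕ) = (j : ℕ) + 1 then f k else 0) := by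
      intro k
      rw [sub_mul, add_mul, ite_mul, ite_mul, ite_mul, one_mul, zero_mul]
    rw [Finset.sum_congr rfl (fun k _ => split k)]
    rw [Finset.sum_sub_distrib, Finset.sum_add_distrib,
      Finset.sum_ite_eq' Finset.univ (0 : Fin n) f,
      Finset.sum_ite_eq' Finset.univ j f]
    have hf0 : f 0 = 1 := by simp [hf, Fin.zero_le]
    by_cases hj : (j : ℕ) + 1 < n
    · set j' : Fin n := ⟨(j : ℕ) + 1, hj⟩ with hj'
      have h3 : ∀ k : Fin n, ((k:ℕ) = (j:ℕ) + 1) ↔ k = j' := by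
        intro k
        constructor
        · intro h; ext; simp only [hj']; omega
        · intro h; subst h; simp only [hj']
      rw [Finset.sum_congr rfl (fun k _ => if_congr (h3 k) rfl rfl),
        Finset.sum_ite_eq' Finset.univ j' f]
      simp only [Finset.mem_univ, if_true, hf0, hf, Matrix.one_apply]
      by_cases hjc : j = c
      · subst hjc
        have : ¬(j' ≤ j) := by simp [Fin.le_def, hj']
        simp [this]
      · have hne : (j:ℕ) ≠ (c:ℕ) := fun h => hjc (Fin.ext h)
        by_cases hlec : j ≤ c
        · have : j' ≤ c := by
            simp only [Fin.le_def, hj']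
            simp only [Fin.le_def] at hlec
            omega
          simp [hjc, hlec, this]
        · have : ¬(j' ≤ c) := by
            simp only [Fin.le_def, hj'] at *
            omega
          simp [hjc, hlec, this]
    · have h3 : ∀ k : Fin n, ¬((k:ℕ) = (j:ℕ) + 1) := by
        intro k
        have := k.isLt
        omega
      rw [Finset.sum_congr rfl (fun k _ => if_neg (h3 k))]
      simp only [Finset.sum_const_zero, Finset.mem_univ, if_true, hf0, hf,
        Matrix.one_apply, sub_zero]
      by_cases hjc : j = c
      · subst hjc; simp
      · have : ¬(j ≤ c) := by
          have hne : (j:ℕ) ≠ (c:ℕ) := fun h => hjc (Fin.ext h)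
          have := c.isLt
          simp only [Fin.le_def]
          omega
        simp [hjc, this]
  have hdetU : U.det = 1 := by
    rw [Matrix.det_of_upperTriangular]
    · simp [hU]
    · intro i k hik
      simp only [hU, Matrix.of_apply, Function.id_def] at *
      rw [if_neg]
      exact fun h => absurd (lt_of_le_of_lt h hik) (lt_irrefl _)
  have hdetA : A.det = (n : ℝ) + 1 := by
    have h1 : A.det * U.det = ((1 : Matrix (Fin n) (Fin n) ℝ) +
        Matrix.replicateCol (Fin 1) (1 : Fin n → ℝ) * Matrix.replicateRow (Fin 1) (1 : Fin n → ℝ)).det := by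
      rw [← Matrix.det_mul, hAU]
    erw [Matrix.det_one_add_replicateCol_mul_replicateRow, hdetU, mul_one] at h1
    rw [h1]
    simp [dotProduct]
    ring
  rw [hW, Matrix.det_mul, hdetA]
  ring
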